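/- Coalescing can be redundantly pushed into pointwise multiplication: for all temporal K-elements k and k', coal(k ·_P k') = coal(coal(k) ·_P k'). -/
import Mathlib


open scoped Classical

namespace TemporalK

variable {K : Type*}

/-- An interval over the time domain `{0, ..., N-1}`: a pair `(b, e)` with `b < e ≤ N`. -/
abbrev TInterval (N : ℕ) := {I : Fin (N + 1) × Fin (N + 1) // I.1 < I.2}

/-- A temporal `K`-element: a function assigning to each interval an element of `K`. -/
abbrev TempEl (N : ℕ) (K : Type*) := TInterval N → K

/-- The interval `I = (b, e)` contains the time point `T` iff `b ≤ T < e`. -/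
def Contains {N : ℕ} (I : TInterval N) (T : ℕ) : Prop :=
  (I.val.1 : ℕ) ≤ T ∧ T < (I.val.2 : ℕ)

/-- The timeslice of `𝒯` at time point `T`: the sum of `𝒯 I` over all intervals `I`
containing `T`. -/
noncomputable def slice {N : ℕ} [CommSemiring K] (𝒯 : TempEl N K) (T : ℕ) : K :=
  ∑ I ∈ Finset.univ.filter (fun I : TInterval N => Contains I T), 𝒯 I

/-- `T` is an (annotation) changepoint of `𝒯` iff `T = 0` or the timeslices at `T - 1`
and `T` differ. -/
def Changepoint {N : ℕ} [CommSemiring K] (𝒯 : TempEl N K) (T : ℕ) : Prop :=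
  T = 0 ∨ slice 𝒯 (T - 1) ≠ slice 𝒯 T

/-- `I = (b, e)` is a changepoint interval of `𝒯` iff `b` is a changepoint, `e` is a
changepoint or equals `N`, and no time point strictly between `b` and `e` is a changepoint. -/
def CPInterval {N : ℕ} [CommSemiring K] (𝒯 : TempEl N K) (I : TInterval N) : Prop :=
  Changepoint 𝒯 (I.val.1 : ℕ) ∧
    (Changepoint 𝒯 (I.val.2 : ℕ) ∨ (I.val.2 : ℕ) = N) ∧
    ∀ T : ℕ, (I.val.1 : ℕ) < T → T < (I.val.2 : ℕ) → ¬ Changepoint 𝒯 T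

/-- `K`-coalescing: maps changepoint intervals `(b, e)` to the timeslice at `b` and all
other intervals to `0`. -/
noncomputable def coal {N : ℕ} [CommSemiring K] (𝒯 : TempEl N K) : TempEl N K :=
  fun I => if CPInterval 𝒯 I then slice 𝒯 (I.val.1 : ℕ) else 0

/-- Snapshot equivalence: equal timeslices at every time point. -/
def SnapEq {N : ℕ} [CommSemiring K] (k k' : TempEl N K) : Prop :=
  ∀ T : ℕ, T < N → slice k T = slice k' T

/-- A temporal `K`-element is coalesced iff it is the `K`-coalescing of some
temporal `K`-element. -/
def Coalesced {N : ℕ} [CommSemiring K] (k : TempEl N K) : Prop :=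
  ∃ 𝒯 : TempEl N K, k = coal 𝒯

/-- Pointwise addition of temporal `K`-elements. -/
def padd {N : ℕ} [CommSemiring K] (k k' : TempEl N K) : TempEl N K :=
  fun I => k I + k' I

/-- Pointwise multiplication of temporal `K`-elements:
`(k ·_P k')(I) = Σ k(I')·k'(I'')` over all pairs `(I', I'')` whose intersection is
nonempty and equals `I`. -/
noncomputable def pmul {N : ℕ} [CommSemiring K] (k k' : TempEl N K) : TempEl N K :=
  fun I =>
    ∑ p ∈ Finset.univ.filter (fun p : TInterval N × TInterval N =>
        max (p.1.val.1 : ℕ) (p.2.val.1 : ℕ) < min (p.1.val.2 : ℕ) (p.2.val.2 : ℕ) ∧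
        (I.val.1 : ℕ) = max (p.1.val.1 : ℕ) (p.2.val.1 : ℕ) ∧
        (I.val.2 : ℕ) = min (p.1.val.2 : ℕ) (p.2.val.2 : ℕ)),
      k p.1 * k' p.2

/-- Addition of the period semiring: coalesced pointwise addition. -/
noncomputable def tadd {N : ℕ} [CommSemiring K] (k k' : TempEl N K) : TempEl N K :=
  coal (padd k k')

/-- Multiplication of the period semiring: coalesced pointwise multiplication. -/
noncomputable def tmul {N : ℕ} [CommSemiring K] (k k' : TempEl N K) : TempEl N K :=
  coal (pmul k k')

/-- The zero of the period semiring: maps every interval to `0`. -/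
def zeroT (N : ℕ) (K : Type*) [CommSemiring K] : TempEl N K := fun _ => 0

/-- The one of the period semiring: maps the interval `(0, N)` to `1` and every other
interval to `0`. -/
def oneT (N : ℕ) (K : Type*) [CommSemiring K] : TempEl N K :=
  fun I => if (I.val.1 : ℕ) = 0 ∧ (I.val.2 : ℕ) = N then 1 else 0

/-- Encoding of an annotation history `f : time points → K` as a coalesced temporal
`K`-element: coalesce the element assigning `f T` to each singleton interval `(T, T+1)`. -/
noncomputable def enc {N : ℕ} [CommSemiring K] (f : Fin N → K) : TempEl N K :=
  coal (fun I =>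
    if h : (I.val.2 : ℕ) = (I.val.1 : ℕ) + 1 then
      f ⟨(I.val.1 : ℕ), by have := I.val.2.isLt; omega⟩
    else 0)

/-- The natural preorder of the semiring `K`. -/
def nle [CommSemiring K] (a b : K) : Prop := ∃ c, a + c = b

/-- The natural preorder of the period semiring (on coalesced temporal `K`-elements). -/
def tle {N : ℕ} [CommSemiring K] (k k' : TempEl N K) : Prop :=
  ∃ k'' : TempEl N K, Coalesced k'' ∧ tadd k k'' = k'

/-- The pointwise monus: assigns `τ_T(k) −_K τ_T(k')` to each singleton interval
`(T, T+1)` and `0` to every non-singleton interval. -/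
noncomputable def pmonus {N : ℕ} [CommSemiring K] (monus : K → K → K)
    (k k' : TempEl N K) : TempEl N K :=
  fun I =>
    if (I.val.2 : ℕ) = (I.val.1 : ℕ) + 1 then
      monus (slice k (I.val.1 : ℕ)) (slice k' (I.val.1 : ℕ))
    else 0

/-- The monus of the period semiring: coalesced pointwise monus. -/
noncomputable def tmonus {N : ℕ} [CommSemiring K] (monus : K → K → K)
    (k k' : TempEl N K) : TempEl N K :=
  coal (pmonus monus k k')

end TemporalK

open TemporalK

section Aux

variable {N : ℕ} {K : Type*} [CommSemiring K]

lemma slice_of_ge (𝒯 : TempEl N K) {T : ℕ} (hT : N ≤ T) : slice 𝒯 T = 0 := by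
  unfold TemporalK.slice
  apply Finset.sum_eq_zero
  intro I hI
  exfalso
  simp only [Finset.mem_filter, Finset.mem_univ, true_and] at hI
  have h2 := I.val.2.isLt
  have := hI.2
  omega

lemma slice_pmul (k k' : TempEl N K) (T : ℕ) :
    slice (pmul k k') T = slice k T * slice k' T := by
  classical
  set A := Finset.univ.filter (fun I : TInterval N => Contains I T) with hA
  set B := fun I : TInterval N => Finset.univ.filter
      (fun p : TInterval N × TInterval N =>
        max (p.1.val.1 : ℕ) (p.2.val.1 : ℕ) < min (p.1.val.2 : ℕ) (p.2.val.2 : ℕ) ∧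
        (I.val.1 : ℕ) = max (p.1.val.1 : ℕ) (p.2.val.1 : ℕ) ∧
        (I.val.2 : ℕ) = min (p.1.val.2 : ℕ) (p.2.val.2 : ℕ)) with hB
  have hdisj : (A : Set (TInterval N)).PairwiseDisjoint B := by
    intro I hI I' hI' hne
    rw [Function.onFun, Finset.disjoint_left]
    intro p hp hp'
    apply hne
    simp only [hB, Finset.mem_filter, Finset.mem_univ, true_and] at hp hp'
    apply Subtype.ext
    apply Prod.ext <;> apply Fin.ext
    · rw [hp.2.1, hp'.2.1]
    · rw [hp.2.2, hp'.2.2]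
  have hbi : A.biUnion B = A ×ˢ A := by
    ext p
    simp only [Finset.mem_biUnion, Finset.mem_product, hA, hB, Finset.mem_filter,
      Finset.mem_univ, true_and]
    constructor
    · rintro ⟨I, hIc, hlt, h1, h2⟩
      unfold Contains at hIc ⊢
      omega
    · rintro ⟨h1, h2⟩
      unfold Contains at h1 h2
      have hb1 := p.1.val.1.isLt
      have hb2 := p.2.val.1.isLt
      have he1 := p.1.val.2.isLt
      have he2 := p.2.val.2.isLt
      refine ⟨⟨(⟨max (p.1.val.1 : ℕ) (p.2.val.1 : ℕ), by omega⟩,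
               ⟨min (p.1.val.2 : ℕ) (p.2.val.2 : ℕ), by omega⟩), ?_⟩, ?_, ?_, rfl, rfl⟩
      · simp only [Fin.lt_def]
        omega
      · show max (p.1.val.1 : ℕ) (p.2.val.1 : ℕ) ≤ T ∧
            T < min (p.1.val.2 : ℕ) (p.2.val.2 : ℕ)
        omega
      · show max (p.1.val.1 : ℕ) (p.2.val.1 : ℕ) < min (p.1.val.2 : ℕ) (p.2.val.2 : ℕ)
        omega
  have hL : slice (pmul k k') T = ∑ p ∈ A.biUnion B, k p.1 * k' p.2 := by
    rw [Finset.sum_biUnion hdisj]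
    rfl
  rw [hL, hbi]
  unfold TemporalK.slice
  rw [Finset.sum_mul_sum, ← Finset.sum_product']

lemma slice_const (𝒯 : TempEl N K) {b : ℕ} :
    ∀ T : ℕ, b ≤ T → (∀ j, b < j → j ≤ T → ¬ Changepoint 𝒯 j) →
      slice 𝒯 T = slice 𝒯 b := by
  intro T
  induction T with
  | zero => intro hb _; have : b = 0 := by omega
            rw [this]
  | succ n ih =>
    intro hb h
    rcases Nat.lt_or_ge b (n+1) with h1 | h2
    · have hnc := h (n+1) h1 le_rfl
      unfold Changepoint at hnc
      push_neg at hnc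
      have heq := hnc.2
      simp only [Nat.add_sub_cancel] at heq
      rw [← heq]
      exact ih (by omega) (fun j hj hj2 => h j hj (by omega))
    · have : b = n+1 := by omega
      rw [this]

lemma slice_coal (𝒯 : TempEl N K) {T : ℕ} (hT : T < N) :
    slice (coal 𝒯) T = slice 𝒯 T := by
  classical
  set b := Nat.findGreatest (Changepoint 𝒯) T with hbdef
  have hble : b ≤ T := Nat.findGreatest_le T
  have hbcp : Changepoint 𝒯 b := Nat.findGreatest_spec (Nat.zero_le T) (Or.inl rfl)
  have hbmax : ∀ j, b < j → j ≤ T → ¬ Changepoint 𝒯 j := fun j hj hj2 =>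
    Nat.findGreatest_is_greatest hj hj2
  have hex : ∃ i, T < i ∧ (Changepoint 𝒯 i ∨ i = N) := ⟨N, hT, Or.inr rfl⟩
  set e := Nat.find hex with hedef
  have heT : T < e := (Nat.find_spec hex).1
  have hecp : Changepoint 𝒯 e ∨ e = N := (Nat.find_spec hex).2
  have heN : e ≤ N := Nat.find_min' hex ⟨hT, Or.inr rfl⟩
  have hemin : ∀ j, T < j → j < e → ¬ Changepoint 𝒯 j := by
    intro j hj hje hcp
    exact Nat.find_min hex hje ⟨hj, Or.inl hcp⟩
  have hbN : b < N + 1 := by omega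
  have heN1 : e < N + 1 := by omega
  set Ibe : TInterval N := ⟨(⟨b, hbN⟩, ⟨e, heN1⟩), by
    simp only [Fin.lt_def]; omega⟩ with hIdef
  have hCP : CPInterval 𝒯 Ibe := by
    refine ⟨hbcp, hecp, ?_⟩
    intro j hj1 hj2
    simp only [hIdef] at hj1 hj2
    rcases Nat.lt_or_ge T j with h | h
    · exact hemin j h hj2
    · exact hbmax j hj1 h
  have hfilter : Finset.univ.filter
      (fun I : TInterval N => Contains I T ∧ CPInterval 𝒯 I) = {Ibe} := by
    ext I
    simp only [Finset.mem_filter, Finset.mem_univ, true_and, Finset.mem_singleton]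
    constructor
    · rintro ⟨hc, hcp1, hcp2, hcp3⟩
      have h1 : (I.val.1 : ℕ) = b := by
        have hle : (I.val.1 : ℕ) ≤ b := Nat.le_findGreatest hc.1 hcp1
        by_contra hne
        exact hcp3 b (by omega) (by have := hc.2; omega) hbcp
      have h2 : (I.val.2 : ℕ) = e := by
        have hle : e ≤ (I.val.2 : ℕ) := Nat.find_min' hex ⟨hc.2, hcp2⟩
        by_contra hne
        have helt : e < (I.val.2 : ℕ) := by omega
        have hce : Changepoint 𝒯 e := by
          rcases hecp with h | h
          · exact h
          · exfalso; have := I.val.2.isLt; omega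
        exact hcp3 e (by omega) helt hce
      apply Subtype.ext
      apply Prod.ext <;> apply Fin.ext <;> simp only [hIdef]
      · exact h1
      · exact h2
    · rintro rfl
      exact ⟨⟨hble, heT⟩, hCP⟩
  have : slice (coal 𝒯) T
      = ∑ I ∈ Finset.univ.filter
          (fun I : TInterval N => Contains I T ∧ CPInterval 𝒯 I),
          slice 𝒯 (I.val.1 : ℕ) := by
    unfold TemporalK.slice coal
    rw [Finset.sum_filter, Finset.sum_filter]
    apply Finset.sum_congr rfl
    intro a _
    by_cases h1 : Contains a T <;> by_cases h2 : CPInterval 𝒯 a <;>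
      simp [h1, h2, TemporalK.slice]
  rw [this, hfilter, Finset.sum_singleton]
  simp only [hIdef]
  exact (slice_const 𝒯 T hble hbmax).symm

lemma coal_congr {𝒯 𝒯' : TempEl N K} (h : ∀ T, slice 𝒯 T = slice 𝒯' T) :
    coal 𝒯 = coal 𝒯' := by
  have hcp : ∀ T, Changepoint 𝒯 T ↔ Changepoint 𝒯' T := by
    intro T; unfold Changepoint; rw [h, h]
  funext I
  unfold coal
  have hCPI : CPInterval 𝒯 I ↔ CPInterval 𝒯' I := by
    unfold CPInterval
    simp only [hcp]
  by_cases hc : CPInterval 𝒯 I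
  · rw [if_pos hc, if_pos (hCPI.mp hc), h]
  · rw [if_neg hc, if_neg (fun x => hc (hCPI.mpr x))]

end Aux

theorem coal_push_pmul {N : ℕ} (hN : 1 ≤ N) {K : Type*} [CommSemiring K]
    (k k' : TempEl N K) :
    coal (pmul k k') = coal (pmul (coal k) k') := by
  apply coal_congr
  intro T
  have h1 : slice (coal k) T = slice k T := by
    rcases Nat.lt_or_ge T N with h | h
    · exact slice_coal k h
    · rw [slice_of_ge _ h, slice_of_ge _ h]
  rw [slice_pmul, slice_pmul, h1]
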